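/- Let ε > 0 and draw m i.i.d. samples from each ρ_{x_j}, j = 1,…,d, independently. Then for every f ∈ H, with probability at least 1 − 2d · exp( − m ε² / (2 ‖k‖_∞) ), the Monte Carlo kernel EDMD approximant satisfies ‖(\hat{K}^{MC} − \hat{K}) f‖_∞ ≤ ε · ‖k‖_∞^{1/2} · ( max_{v∈𝟙} vᵀ K_X^{-1} v )^{1/2} · ‖f‖_H. -/

import Mathlib

open MeasureTheory ProbabilityTheory Matrix
open scoped RealInnerProductSpace

noncomputable section

/-- The kernel matrix `K_X = (k(x_i,x_j))_{i,j}` built from the feature map `Φ`. -/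
def kerMatrix {n : ℕ} {H : Type*} [NormedAddCommGroup H] [InnerProductSpace ℝ H]
    (Φ : EuclideanSpace ℝ (Fin n) → H) (d : ℕ) (x : Fin d → EuclideanSpace ℝ (Fin n)) :
    Matrix (Fin d) (Fin d) ℝ :=
  Matrix.of fun i j => ⟪Φ (x i), Φ (x j)⟫

/-- The kernel vector `k_X(z) = (k(x_1,z),…,k(x_d,z))ᵀ`. -/
def kerVec {n : ℕ} {H : Type*} [NormedAddCommGroup H] [InnerProductSpace ℝ H]
    (Φ : EuclideanSpace ℝ (Fin n) → H) (d : ℕ) (x : Fin d → EuclideanSpace ℝ (Fin n))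
    (z : EuclideanSpace ℝ (Fin n)) : Fin d → ℝ :=
  fun i => ⟪Φ (x i), Φ z⟫

/-- The exact propagation matrix `(K_{X,Y})_{ij} = ∫_Ω k(x_i,y) dρ_{x_j}(y)`. -/
def propMatrix {n : ℕ} {H : Type*} [NormedAddCommGroup H] [InnerProductSpace ℝ H]
    (Ω : Set (EuclideanSpace ℝ (Fin n)))
    (ρ : ProbabilityTheory.Kernel (EuclideanSpace ℝ (Fin n)) (EuclideanSpace ℝ (Fin n)))
    (Φ : EuclideanSpace ℝ (Fin n) → H) (d : ℕ) (x : Fin d → EuclideanSpace ℝ (Fin n)) :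
    Matrix (Fin d) (Fin d) ℝ :=
  Matrix.of fun i j => ∫ y in Ω, ⟪Φ (x i), Φ y⟫ ∂(ρ (x j))

/-- The Monte Carlo propagation matrix
`(K^{MC}_{X,Y})_{ij} = (1/m) ∑_{l=1}^m k(x_i, y_{l,j})` at the sample point `θ`. -/
def propMatrixMC {n : ℕ} {H : Type*} [NormedAddCommGroup H] [InnerProductSpace ℝ H]
    (Φ : EuclideanSpace ℝ (Fin n) → H) (d : ℕ) (x : Fin d → EuclideanSpace ℝ (Fin n))
    (m : ℕ) {Θ : Type*} (Y : Fin m × Fin d → Θ → EuclideanSpace ℝ (Fin n)) (θ : Θ) :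
    Matrix (Fin d) (Fin d) ℝ :=
  Matrix.of fun i j => (1 / (m : ℝ)) * ∑ l : Fin m, ⟪Φ (x i), Φ (Y (l, j) θ)⟫

/-- (Monte Carlo error bound.) With `m` i.i.d. samples from each
`ρ_{x_j}`, for every `f ∈ H`, with probability at least `1 − 2d·exp(−mε²/(2‖k‖_∞))`,
the Monte Carlo kernel EDMD approximant satisfies
`‖(K̂^{MC} − K̂) f‖_∞ ≤ ε · ‖k‖_∞^{1/2} · (max_{v∈𝟙} vᵀ K_X⁻¹ v)^{1/2} · ‖f‖_H`. -/


lemma hoeffding_core_nonneg {p : ℝ} (hp0 : 0 ≤ p) (hp1 : p ≤ 1) {h : ℝ} (hh : 0 ≤ h) :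
    Real.log (1 - p + p * Real.exp h) ≤ p * h + h ^ 2 / 8 := by
  set D : ℝ → ℝ := fun y => 1 - p + p * Real.exp y with hDdef
  have hDpos : ∀ y, 0 < D y := by
    intro y
    rcases eq_or_lt_of_le hp1 with rfl | hlt
    · have := Real.exp_pos y; simp only [hDdef]; nlinarith
    · have h1 : 0 ≤ p * Real.exp y := mul_nonneg hp0 (Real.exp_pos y).le
      simp only [hDdef]; nlinarith
  have hDeq : ∀ y, D y = 1 - p + p * Real.exp y := fun _ => rfl
  set F : ℝ → ℝ := fun y => Real.log (D y) - p * y with hFdef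
  set F' : ℝ → ℝ := fun y => p * Real.exp y / D y - p with hF'def
  have hdD : ∀ y, HasDerivAt D (p * Real.exp y) y := fun y => by
    exact ((Real.hasDerivAt_exp y).const_mul p).const_add (1 - p)
  have hdF : ∀ y, HasDerivAt F (F' y) y := by
    intro y
    have h1 := ((hdD y).log (hDpos y).ne')
    have h2 : HasDerivAt (fun y : ℝ => p * y) p y := by
      simpa using (hasDerivAt_id y).const_mul p
    exact h1.sub h2
  have hdF' : ∀ y, HasDerivAt F' (p * Real.exp y * (1 - p) / (D y) ^ 2) y := by
    intro y
    have h1 : HasDerivAt (fun y => p * Real.exp y) (p * Real.exp y) y :=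
      (Real.hasDerivAt_exp y).const_mul p
    have hd := (h1.div (hdD y) (hDpos y).ne').sub_const p
    have hkey : D y - p * Real.exp y = 1 - p := by rw [hDeq]; ring
    have heq : (p * Real.exp y * D y - p * Real.exp y * (p * Real.exp y)) / D y ^ 2
        = p * Real.exp y * (1 - p) / (D y) ^ 2 := by
      rw [div_eq_div_iff (pow_ne_zero 2 (hDpos y).ne') (pow_ne_zero 2 (hDpos y).ne')]
      linear_combination (p * Real.exp y * D y ^ 2) * hkey
    rw [heq] at hd
    exact hd
  have hF''le : ∀ y, p * Real.exp y * (1 - p) / (D y) ^ 2 ≤ 1 / 4 := by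
    intro y
    rw [div_le_iff₀ (pow_pos (hDpos y) 2)]
    have h2 := hDeq y
    nlinarith [sq_nonneg ((1 - p) - p * Real.exp y), Real.exp_pos y, hDpos y]
  have hF'0 : F' 0 = 0 := by
    have h1 : D 0 = 1 := by rw [hDeq]; simp
    simp [hF'def, h1]
  have step1 : ∀ y, 0 ≤ y → F' y ≤ y / 4 := by
    intro y hy
    have hd : ∀ z : ℝ, HasDerivAt (fun y : ℝ => y / 4 - F' y)
        (1 / 4 - p * Real.exp z * (1 - p) / (D z) ^ 2) z := by
      intro z
      have := ((hasDerivAt_id z).div_const 4).sub (hdF' z)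
      exact this
    have hmono : Monotone (fun y : ℝ => y / 4 - F' y) := by
      apply monotone_of_deriv_nonneg
      · exact fun z => (hd z).differentiableAt
      · intro z
        rw [(hd z).deriv]
        linarith [hF''le z]
    have := hmono hy
    simp only [hF'0, zero_div, sub_zero] at this
    linarith
  have hF0 : F 0 = 0 := by
    have h1 : D 0 = 1 := by rw [hDeq]; simp
    simp [hFdef, h1]
  have hdK : ∀ z : ℝ, HasDerivAt (fun y : ℝ => y ^ 2 / 8 - F y) (z / 4 - F' z) z := by
    intro z
    have := ((hasDerivAt_pow 2 z).div_const 8).sub (hdF z)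
    exact this.congr_deriv (by norm_num; ring)
  have step2 : F h ≤ h ^ 2 / 8 := by
    have hmono : MonotoneOn (fun y : ℝ => y ^ 2 / 8 - F y) (Set.Ici (0:ℝ)) := by
      apply monotoneOn_of_deriv_nonneg (convex_Ici 0)
      · exact Continuous.continuousOn
          (continuous_iff_continuousAt.2 fun z => (hdK z).differentiableAt.continuousAt)
      · exact fun z _ => (hdK z).differentiableAt.differentiableWithinAt
      · intro z hz
        rw [interior_Ici] at hz
        rw [(hdK z).deriv]
        linarith [step1 z (le_of_lt hz)]
    have := hmono (Set.self_mem_Ici) (Set.mem_Ici.2 hh) hh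
    simp only [hF0, sub_zero] at this
    linarith [this]
  have hFh : F h = Real.log (1 - p + p * Real.exp h) - p * h := by rw [hFdef]
  linarith [step2, hFh.symm.le]
lemma hoeffding_core {p : ℝ} (hp0 : 0 ≤ p) (hp1 : p ≤ 1) (h : ℝ) :
    Real.log (1 - p + p * Real.exp h) ≤ p * h + h ^ 2 / 8 := by
  rcases le_or_gt 0 h with hh | hh
  · exact hoeffding_core_nonneg hp0 hp1 hh
  · have h1 := hoeffding_core_nonneg (p := 1 - p) (by linarith) (by linarith)
      (h := -h) (by linarith)
    have hpos : (0:ℝ) < p + (1 - p) * Real.exp (-h) := by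
      rcases eq_or_lt_of_le hp0 with heq | hlt
      · rw [← heq]; norm_num [Real.exp_pos]
      · have := mul_nonneg (sub_nonneg.2 hp1) (Real.exp_pos (-h)).le; linarith
    have hkey : 1 - p + p * Real.exp h = Real.exp h * (p + (1 - p) * Real.exp (-h)) := by
      rw [Real.exp_neg]
      field_simp
      ring
    rw [hkey, Real.log_mul (Real.exp_ne_zero h) hpos.ne', Real.log_exp]
    have h1' : Real.log (p + (1 - p) * Real.exp (-h)) ≤ (1 - p) * (-h) + h ^ 2 / 8 := by
      have e1 : 1 - (1 - p) + (1 - p) * Real.exp (-h) = p + (1 - p) * Real.exp (-h) := by ring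
      have e2 : (1 - p) * (-h) + (-h) ^ 2 / 8 = (1 - p) * (-h) + h ^ 2 / 8 := by ring
      rw [e1, e2] at h1
      exact h1
    linarith

lemma mgf_le_of_mean_zero {Θ : Type*} [MeasurableSpace Θ] {P : Measure Θ}
    [IsProbabilityMeasure P] {X : Θ → ℝ} (hX : Measurable X) {A B : ℝ} (hAB : A < B)
    (hA : A ≤ 0) (hB : 0 ≤ B) (hb : ∀ᵐ θ ∂P, X θ ∈ Set.Icc A B)
    (hmean : ∫ θ, X θ ∂P = 0) (t : ℝ) :
    mgf X P t ≤ Real.exp (t ^ 2 * (B - A) ^ 2 / 8) := by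
  have hBA : (0:ℝ) < B - A := by linarith
  have hXint : Integrable X P := by
    refine (integrable_const (|A| + |B|)).mono' hX.aestronglyMeasurable ?_
    filter_upwards [hb] with θ hθ
    rw [Real.norm_eq_abs]
    rcases hθ with ⟨h1, h2⟩
    rcases abs_cases (X θ) with ⟨he, _⟩ | ⟨he, _⟩ <;> rcases abs_cases A with ⟨hA1,_⟩|⟨hA1,_⟩ <;>
      rcases abs_cases B with ⟨hB1,_⟩|⟨hB1,_⟩ <;> linarith
  have hexpint : Integrable (fun θ => Real.exp (t * X θ)) P := by
    refine (integrable_const (Real.exp (|t| * (|A| + |B|)))).mono'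
      (hX.const_mul t).exp.aestronglyMeasurable ?_
    filter_upwards [hb] with θ hθ
    rw [Real.norm_eq_abs, abs_of_pos (Real.exp_pos _), Real.exp_le_exp]
    have h3 : |X θ| ≤ |A| + |B| := by
      rcases hθ with ⟨h1, h2⟩
      rcases abs_cases (X θ) with ⟨he, _⟩ | ⟨he, _⟩ <;> rcases abs_cases A with ⟨hA1,_⟩|⟨hA1,_⟩ <;>
        rcases abs_cases B with ⟨hB1,_⟩|⟨hB1,_⟩ <;> linarith
    calc t * X θ ≤ |t * X θ| := le_abs_self _
    _ = |t| * |X θ| := abs_mul _ _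
    _ ≤ |t| * (|A| + |B|) := mul_le_mul_of_nonneg_left h3 (abs_nonneg t)
  set C1 : ℝ := (B * Real.exp (t * A) - A * Real.exp (t * B)) / (B - A) with hC1
  set C2 : ℝ := (Real.exp (t * B) - Real.exp (t * A)) / (B - A) with hC2
  have hpt : ∀ᵐ θ ∂P, Real.exp (t * X θ) ≤ C1 + C2 * X θ := by
    filter_upwards [hb] with θ hθ
    rcases hθ with ⟨h1, h2⟩
    have hl1 : (0:ℝ) ≤ (B - X θ) / (B - A) := div_nonneg (by linarith) hBA.le
    have hl2 : (0:ℝ) ≤ (X θ - A) / (B - A) := div_nonneg (by linarith) hBA.le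
    have hsum : (B - X θ) / (B - A) + (X θ - A) / (B - A) = 1 := by
      rw [← add_div, div_eq_one_iff_eq hBA.ne']
      ring
    have hcx := convexOn_exp.2 (Set.mem_univ (t * A)) (Set.mem_univ (t * B)) hl1 hl2 hsum
    simp only [smul_eq_mul] at hcx
    have harg : (B - X θ) / (B - A) * (t * A) + (X θ - A) / (B - A) * (t * B) = t * X θ := by
      field_simp
      ring
    rw [harg] at hcx
    calc Real.exp (t * X θ) ≤
        (B - X θ) / (B - A) * Real.exp (t * A) + (X θ - A) / (B - A) * Real.exp (t * B) := hcx
    _ = C1 + C2 * X θ := by rw [hC1, hC2]; field_simp; ring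
  have hint_rhs : Integrable (fun θ => C1 + C2 * X θ) P :=
    (integrable_const C1).add (hXint.const_mul C2)
  have hmgf : mgf X P t ≤ C1 := by
    have hle := integral_mono_ae hexpint hint_rhs hpt
    rw [mgf]
    calc ∫ θ, Real.exp (t * X θ) ∂P ≤ ∫ θ, (C1 + C2 * X θ) ∂P := hle
    _ = C1 + C2 * ∫ θ, X θ ∂P := by
        rw [integral_add (integrable_const C1) (hXint.const_mul C2), integral_const,
          integral_const_mul]
        simp
    _ = C1 := by rw [hmean]; ring
  set p : ℝ := -A / (B - A) with hp
  have hp0 : 0 ≤ p := div_nonneg (neg_nonneg.2 hA) hBA.le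
  have hp1 : p ≤ 1 := by rw [hp, div_le_one hBA]; linarith
  have hC1eq : C1 = Real.exp (t * A) * (1 - p + p * Real.exp (t * (B - A))) := by
    rw [hC1, hp, div_eq_iff hBA.ne']
    have hexp : Real.exp (t * B) = Real.exp (t * A) * Real.exp (t * (B - A)) := by
      rw [← Real.exp_add]
      ring_nf
    rw [hexp]
    field_simp
    ring
  have hposarg : 0 < 1 - p + p * Real.exp (t * (B - A)) := by
    rcases eq_or_lt_of_le hp1 with heq | hlt
    · rw [heq]; norm_num [Real.exp_pos]
    · have := mul_nonneg hp0 (Real.exp_pos (t * (B - A))).le; linarith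
  have hlog := hoeffding_core hp0 hp1 (t * (B - A))
  have hC1le : C1 ≤ Real.exp (t * A + (p * (t * (B - A)) + (t * (B - A)) ^ 2 / 8)) := by
    rw [hC1eq, Real.exp_add]
    apply mul_le_mul_of_nonneg_left _ (Real.exp_pos _).le
    calc 1 - p + p * Real.exp (t * (B - A)) =
        Real.exp (Real.log (1 - p + p * Real.exp (t * (B - A)))) := (Real.exp_log hposarg).symm
    _ ≤ _ := Real.exp_le_exp.2 hlog
  refine hmgf.trans (hC1le.trans (Real.exp_le_exp.2 ?_))
  have hpe : p * (t * (B - A)) = -A * t := by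
    rw [hp]
    field_simp
  rw [hpe]
  ring_nf
  nlinarith [sq_nonneg (t * (B - A))]
lemma tail_bound {Θ : Type*} [MeasurableSpace Θ] {P : Measure Θ} [IsProbabilityMeasure P]
    {ι : Type*} {X : ι → Θ → ℝ} (hind : iIndepFun X P)
    (hmeas : ∀ i, Measurable (X i)) (s : Finset ι) {c : ℝ} (hc : 0 < c)
    (hbd : ∀ i ∈ s, ∀ᵐ θ ∂P, |X i θ| ≤ 2 * c)
    (hmgfb : ∀ i ∈ s, ∀ t : ℝ, mgf (X i) P t ≤ Real.exp (t ^ 2 * c ^ 2 / 2))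
    {ε : ℝ} (hε : 0 < ε) :
    (P {θ | (s.card : ℝ) * ε ≤ ∑ i ∈ s, X i θ}).toReal ≤
      Real.exp (-(s.card : ℝ) * ε ^ 2 / (2 * c ^ 2)) := by
  set t : ℝ := ε / c ^ 2 with ht
  have ht0 : 0 ≤ t := by positivity
  have hbd' : ∀ᵐ θ ∂P, ∀ i ∈ s, |X i θ| ≤ 2 * c :=
    (ae_ball_iff s.countable_toSet).2 hbd
  have hintsum : Integrable (fun θ => Real.exp (t * (∑ i ∈ s, X i) θ)) P := by
    refine (integrable_const (Real.exp (t * (s.card * (2 * c))))).mono'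
      ?_ ?_
    · have hm : Measurable fun θ => (∑ i ∈ s, X i) θ := by
        simp only [Finset.sum_apply]
        exact s.measurable_sum fun i _ => hmeas i
      exact (hm.const_mul t).exp.aestronglyMeasurable
    · filter_upwards [hbd'] with θ hθ
      rw [Real.norm_eq_abs, abs_of_pos (Real.exp_pos _), Real.exp_le_exp]
      apply mul_le_mul_of_nonneg_left _ ht0
      calc (∑ i ∈ s, X i) θ = ∑ i ∈ s, X i θ := by simp [Finset.sum_apply]
      _ ≤ ∑ i ∈ s, (2 * c) := Finset.sum_le_sum fun i hi => (abs_le.1 (hθ i hi)).2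
      _ = s.card * (2 * c) := by rw [Finset.sum_const, nsmul_eq_mul]
  have hset : {θ | (s.card : ℝ) * ε ≤ ∑ i ∈ s, X i θ} =
      {θ | (s.card : ℝ) * ε ≤ (∑ i ∈ s, X i) θ} := by
    ext θ; simp [Finset.sum_apply]
  rw [hset]
  have hch := measure_ge_le_exp_mul_mgf (μ := P) (X := ∑ i ∈ s, X i)
    ((s.card : ℝ) * ε) ht0 hintsum
  refine hch.trans ?_
  have hprod : mgf (∑ i ∈ s, X i) P t ≤ Real.exp (t ^ 2 * c ^ 2 / 2) ^ s.card := by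
    rw [hind.mgf_sum hmeas s]
    calc ∏ i ∈ s, mgf (X i) P t ≤ ∏ i ∈ s, Real.exp (t ^ 2 * c ^ 2 / 2) :=
      Finset.prod_le_prod (fun i _ => mgf_nonneg) (fun i hi => hmgfb i hi t)
    _ = _ := by rw [Finset.prod_const]
  calc Real.exp (-t * ((s.card : ℝ) * ε)) * mgf (∑ i ∈ s, X i) P t ≤
      Real.exp (-t * ((s.card : ℝ) * ε)) * Real.exp (t ^ 2 * c ^ 2 / 2) ^ s.card :=
        mul_le_mul_of_nonneg_left hprod (Real.exp_pos _).le
  _ = Real.exp (-t * ((s.card : ℝ) * ε) + (s.card : ℝ) * (t ^ 2 * c ^ 2 / 2)) := by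
      rw [← Real.exp_nat_mul, ← Real.exp_add]
  _ = Real.exp (-(s.card : ℝ) * ε ^ 2 / (2 * c ^ 2)) := by
      congr 1
      rw [ht]
      field_simp
      ring
lemma inner_sum_smul_left {H : Type*} [NormedAddCommGroup H] [InnerProductSpace ℝ H]
    {ι : Type*} [Fintype ι] (Φ : ι → H) (u : ι → ℝ) (y : H) :
    ⟪∑ i, u i • Φ i, y⟫ = ∑ i, u i * ⟪Φ i, y⟫ := by
  rw [sum_inner]
  exact Finset.sum_congr rfl fun i _ => real_inner_smul_left _ _ _

lemma inner_sum_smul_right {H : Type*} [NormedAddCommGroup H] [InnerProductSpace ℝ H]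
    {ι : Type*} [Fintype ι] (Φ : ι → H) (u : ι → ℝ) (y : H) :
    ⟪y, ∑ i, u i • Φ i⟫ = ∑ i, u i * ⟪y, Φ i⟫ := by
  rw [inner_sum]
  exact Finset.sum_congr rfl fun i _ => real_inner_smul_right _ _ _

theorem kEDMD_monte_carlo_error_bound
    {n : ℕ} (hn : 1 ≤ n)
    (Ω : Set (EuclideanSpace ℝ (Fin n)))
    (hΩne : Ω.Nonempty) (hΩopen : IsOpen Ω) (hΩbdd : Bornology.IsBounded Ω)
    (ρ : ProbabilityTheory.Kernel (EuclideanSpace ℝ (Fin n)) (EuclideanSpace ℝ (Fin n)))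
    [IsMarkovKernel ρ] (hρΩ : ∀ x ∈ Ω, ρ x Ω = 1)
    {H : Type*} [NormedAddCommGroup H] [InnerProductSpace ℝ H] [CompleteSpace H]
    (ev : H →ₗ[ℝ] (EuclideanSpace ℝ (Fin n) → ℝ))
    (Φ : EuclideanSpace ℝ (Fin n) → H)
    (hrepr : ∀ (f : H), ∀ x ∈ Ω, ev f x = ⟪f, Φ x⟫)
    (hΦcont : ContinuousOn Φ Ω)
    (Mk : ℝ) (hMk : ∀ x ∈ Ω, ∀ y ∈ Ω, |⟪Φ x, Φ y⟫| ≤ Mk)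
    (d : ℕ) (hd : 1 ≤ d) (x : Fin d → EuclideanSpace ℝ (Fin n))
    (hxΩ : ∀ i, x i ∈ Ω) (hxinj : Function.Injective x)
    (hKXpos : (kerMatrix Φ d x).PosDef)
    -- the i.i.d. samples `y_{l,j} ∼ ρ_{x_j}`, independent across all indices
    (m : ℕ) (hm : 1 ≤ m)
    {Θ : Type*} [MeasurableSpace Θ] (P : Measure Θ) [IsProbabilityMeasure P]
    (Y : Fin m × Fin d → Θ → EuclideanSpace ℝ (Fin n))
    (hYmeas : ∀ p, Measurable (Y p))
    (hYindep : ProbabilityTheory.iIndepFun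
      Y P)
    (hYlaw : ∀ (l : Fin m) (j : Fin d), Measure.map (Y (l, j)) P = ρ (x j))
    (f : H)
    (ε : ℝ) (hε : 0 < ε) :
    ENNReal.ofReal (1 - 2 * d * Real.exp (-(m : ℝ) * ε ^ 2 / (2 * Mk))) ≤
      P {θ : Θ | ∀ z ∈ Ω,
        |(fun j => ev f (x j)) ⬝ᵥ
            ((kerMatrix Φ d x)⁻¹ *ᵥ (propMatrixMC Φ d x m Y θ *ᵥ
              ((kerMatrix Φ d x)⁻¹ *ᵥ kerVec Φ d x z))) -
          (fun j => ev f (x j)) ⬝ᵥ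
            ((kerMatrix Φ d x)⁻¹ *ᵥ (propMatrix Ω ρ Φ d x *ᵥ
              ((kerMatrix Φ d x)⁻¹ *ᵥ kerVec Φ d x z)))| ≤
          ε * Real.sqrt Mk *
            Real.sqrt (sSup {r : ℝ | ∃ v : Fin d → ℝ,
              (∀ i, |v i| = 1) ∧ r = v ⬝ᵥ ((kerMatrix Φ d x)⁻¹ *ᵥ v)}) *
            ‖f‖} := by
  classical
  have hΩmeas : MeasurableSet Ω := hΩopen.measurableSet
  set K : Matrix (Fin d) (Fin d) ℝ := kerMatrix Φ d x with hKdef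
  set fX : Fin d → ℝ := fun j => ev f (x j) with hfXdef
  -- trivial bound when the probability lower bound is vacuous is not needed;
  -- but we do need the case f = 0 separately
  by_cases hf0 : f = 0
  · subst hf0
    have hset : ∀ θ : Θ, θ ∈ {θ : Θ | ∀ z ∈ Ω,
        |fX ⬝ᵥ (K⁻¹ *ᵥ (propMatrixMC Φ d x m Y θ *ᵥ (K⁻¹ *ᵥ kerVec Φ d x z))) -
          fX ⬝ᵥ (K⁻¹ *ᵥ (propMatrix Ω ρ Φ d x *ᵥ (K⁻¹ *ᵥ kerVec Φ d x z)))| ≤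
          ε * Real.sqrt Mk *
            Real.sqrt (sSup {r : ℝ | ∃ v : Fin d → ℝ,
              (∀ i, |v i| = 1) ∧ r = v ⬝ᵥ (K⁻¹ *ᵥ v)}) * ‖(0:H)‖} := by
      intro θ z hz
      have hfX0 : fX = fun _ => (0:ℝ) := by funext j; simp [hfXdef]
      rw [hfX0]
      simp [dotProduct]
    rw [Set.eq_univ_of_forall hset, measure_univ]
    refine ENNReal.ofReal_le_one.2 ?_
    have : 0 ≤ 2 * (d:ℝ) * Real.exp (-(m : ℝ) * ε ^ 2 / (2 * Mk)) := by positivity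
    linarith
  have hfn : (0:ℝ) < ‖f‖ := norm_pos_iff.2 hf0
  -- `Mk` is positive
  have hMk0 : 0 < Mk := by
    have i0 : Fin d := ⟨0, hd⟩
    have hne : (Pi.single i0 1 : Fin d → ℝ) ≠ 0 := by
      intro hcontra
      have := congrFun hcontra i0
      simp at this
    have hpos := hKXpos.dotProduct_mulVec_pos (x := (Pi.single i0 1 : Fin d → ℝ)) hne
    have heval : (star (Pi.single i0 (1:ℝ))) ⬝ᵥ (K *ᵥ Pi.single i0 1) = K i0 i0 := by
      simp [dotProduct, Matrix.mulVec, Pi.single_apply, mul_ite, star_trivial,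
        Finset.sum_ite_eq, Finset.sum_ite_eq']
    rw [heval] at hpos
    have hKle : K i0 i0 ≤ Mk := by
      have := hMk (x i0) (hxΩ i0) (x i0) (hxΩ i0)
      exact (le_abs_self _).trans this
    linarith
  have hMknn : 0 ≤ Mk := hMk0.le
  -- matrix inverse facts
  have hdet : IsUnit K.det := isUnit_iff_ne_zero.2 hKXpos.det_pos.ne'
  have hKK : K * K⁻¹ = 1 := Matrix.mul_nonsing_inv _ hdet
  have hKsymT : Kᵀ = K := by
    ext i j
    exact real_inner_comm _ _
  have hKisymm : (K⁻¹)ᵀ = K⁻¹ := by rw [Matrix.transpose_nonsing_inv, hKsymT]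
  set a : Fin d → ℝ := K⁻¹ *ᵥ fX with hadef
  set g : H := ∑ i, a i • Φ (x i) with hgdef
  have hgip : ∀ y, ⟪g, Φ y⟫ = ∑ i, a i * ⟪Φ (x i), Φ y⟫ := by
    intro y; rw [hgdef]; exact inner_sum_smul_left _ _ _
  have hKa : K *ᵥ a = fX := by
    rw [hadef, Matrix.mulVec_mulVec, hKK, Matrix.one_mulVec]
  have hgX : ∀ i, ⟪g, Φ (x i)⟫ = fX i := by
    intro i
    rw [hgip]
    calc ∑ j, a j * ⟪Φ (x j), Φ (x i)⟫ = ∑ j, K i j * a j := by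
          refine Finset.sum_congr rfl fun j _ => ?_
          rw [mul_comm]
          congr 1
          exact real_inner_comm _ _
    _ = (K *ᵥ a) i := by simp [Matrix.mulVec, dotProduct]
    _ = fX i := by rw [hKa]
  have hfrepr : ∀ i, ⟪f, Φ (x i)⟫ = fX i := fun i => (hrepr f (x i) (hxΩ i)).symm
  have horth : ⟪g, f - g⟫ = 0 := by
    rw [real_inner_comm, hgdef, inner_sum]
    refine Finset.sum_eq_zero fun i _ => ?_
    rw [real_inner_smul_right, inner_sub_left, hfrepr i, ← hgdef, hgX i]
    simp
  have hgnorm : ‖g‖ ≤ ‖f‖ := by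
    have hfeq : f = g + (f - g) := by abel
    have hdecomp : ‖f‖ ^ 2 = ‖g‖ ^ 2 + 2 * ⟪g, f - g⟫ + ‖f - g‖ ^ 2 := by
      nth_rewrite 1 [hfeq]
      exact norm_add_sq_real _ _
    rw [horth] at hdecomp
    nlinarith [norm_nonneg g, norm_nonneg f, sq_nonneg ‖f - g‖]
  have hPhinorm : ∀ y ∈ Ω, ‖Φ y‖ ≤ Real.sqrt Mk := by
    intro y hy
    rw [norm_eq_sqrt_real_inner]
    exact Real.sqrt_le_sqrt ((le_abs_self _).trans (hMk y hy y hy))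
  set c : ℝ := Real.sqrt Mk * ‖f‖ with hcdef
  have hc : 0 < c := mul_pos (Real.sqrt_pos.2 hMk0) hfn
  have hgb : ∀ y ∈ Ω, |⟪g, Φ y⟫| ≤ c := by
    intro y hy
    calc |⟪g, Φ y⟫| ≤ ‖g‖ * ‖Φ y‖ := abs_real_inner_le_norm _ _
    _ ≤ ‖f‖ * Real.sqrt Mk :=
        mul_le_mul hgnorm (hPhinorm y hy) (norm_nonneg _) (norm_nonneg f)
    _ = c := mul_comm _ _
  -- the truncated observable
  set q : EuclideanSpace ℝ (Fin n) → ℝ := fun y => if y ∈ Ω then ⟪g, Φ y⟫ else 0 with hqdef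
  have hqmeas : Measurable q := by
    apply measurable_of_restrict_of_restrict_compl hΩmeas
    · have hrw : Set.domRestrict Ω q = fun y : Ω => ⟪g, Φ (y : EuclideanSpace ℝ (Fin n))⟫ := by
        funext y
        simp [hqdef, y.2, Set.domRestrict_apply]
      rw [hrw]
      exact (Continuous.inner continuous_const hΦcont.restrict).measurable
    · have hrw : Set.domRestrict Ωᶜ q = fun _ => (0:ℝ) := by
        funext y
        have hy := y.2
        rw [Set.mem_compl_iff] at hy
        simp [hqdef, hy, Set.domRestrict_apply]
      rw [hrw]
      exact measurable_const
  have hqb : ∀ y, |q y| ≤ c := by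
    intro y
    by_cases hy : y ∈ Ω
    · simpa [hqdef, hy] using hgb y hy
    · simp [hqdef, hy, hc.le]
  set μJ : Fin d → ℝ := fun j => ∫ y, q y ∂(ρ (x j)) with hμdef
  have hqint : ∀ j, Integrable q (ρ (x j)) := fun j =>
    (integrable_const c).mono' hqmeas.aestronglyMeasurable
      (ae_of_all _ fun y => by rw [Real.norm_eq_abs]; exact hqb y)
  have hμb : ∀ j, |μJ j| ≤ c := by
    intro j
    rw [hμdef]
    calc |∫ y, q y ∂(ρ (x j))| ≤ ∫ y, |q y| ∂(ρ (x j)) := by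
          simpa [Real.norm_eq_abs] using norm_integral_le_integral_norm (μ := ρ (x j)) q
    _ ≤ ∫ _, c ∂(ρ (x j)) := integral_mono (hqint j).abs (integrable_const c)
          (fun y => hqb y)
    _ = c := by simp
  -- the centered i.i.d. variables
  set X : Fin m × Fin d → Θ → ℝ := fun p θ => q (Y p θ) - μJ p.2 with hXdef
  have hXmeas : ∀ p, Measurable (X p) := fun p => (hqmeas.comp (hYmeas p)).sub measurable_const
  have hXind : iIndepFun X P :=
    hYindep.comp (fun p => fun y => q y - μJ p.2) (fun p => hqmeas.sub measurable_const)
  have hmapY : ∀ p : Fin m × Fin d, Measure.map (Y p) P = ρ (x p.2) := by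
    intro p
    have h := hYlaw p.1 p.2
    rwa [Prod.mk.eta] at h
  have hqYint : ∀ p : Fin m × Fin d, Integrable (fun θ => q (Y p θ)) P := fun p =>
    (integrable_const c).mono' (hqmeas.comp (hYmeas p)).aestronglyMeasurable
      (ae_of_all _ fun θ => by rw [Real.norm_eq_abs]; exact hqb _)
  have hXmean : ∀ p, ∫ θ, X p θ ∂P = 0 := by
    intro p
    simp only [hXdef]
    rw [integral_sub (hqYint p) (integrable_const _), integral_const]
    simp only [probReal_univ, one_smul]
    have h : ∫ θ, q (Y p θ) ∂P = ∫ y, q y ∂(ρ (x p.2)) := by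
      rw [← hmapY p, integral_map (hYmeas p).aemeasurable hqmeas.aestronglyMeasurable]
    rw [h]
    simp [hμdef]
  have hXbd : ∀ p : Fin m × Fin d, ∀ᵐ θ ∂P, |X p θ| ≤ 2 * c := by
    intro p
    refine ae_of_all _ fun θ => ?_
    simp only [hXdef]
    calc |q (Y p θ) - μJ p.2| ≤ |q (Y p θ)| + |μJ p.2| := abs_sub _ _
    _ ≤ c + c := add_le_add (hqb _) (hμb _)
    _ = 2 * c := by ring
  have hXmgf : ∀ p : Fin m × Fin d, ∀ t : ℝ, mgf (X p) P t ≤ Real.exp (t ^ 2 * c ^ 2 / 2) := by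
    intro p t
    have hμ1 := (abs_le.1 (hμb p.2)).1
    have hμ2 := (abs_le.1 (hμb p.2)).2
    have hb : ∀ᵐ θ ∂P, X p θ ∈ Set.Icc (-c - μJ p.2) (c - μJ p.2) := by
      refine ae_of_all _ fun θ => ?_
      simp only [hXdef, Set.mem_Icc]
      have h1 := abs_le.1 (hqb (Y p θ))
      exact ⟨by linarith [h1.1], by linarith [h1.2]⟩
    have hle := mgf_le_of_mean_zero (hXmeas p) (A := -c - μJ p.2) (B := c - μJ p.2)
      (by linarith) (by linarith) (by linarith) hb (hXmean p) t
    refine hle.trans (le_of_eq ?_)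
    congr 1
    ring
  -- the tail events
  set ε' : ℝ := ε * ‖f‖ with hε'def
  have hε'pos : 0 < ε' := mul_pos hε hfn
  set e0 : ℝ := Real.exp (-(m : ℝ) * ε ^ 2 / (2 * Mk)) with he0def
  have he0nn : 0 ≤ e0 := by rw [he0def]; exact (Real.exp_pos _).le
  have he0 : Real.exp (-(m:ℝ) * ε' ^ 2 / (2 * c ^ 2)) = e0 := by
    rw [he0def]
    congr 1
    rw [hε'def, hcdef, mul_pow, mul_pow, Real.sq_sqrt hMknn]
    have : ‖f‖ ^ 2 ≠ 0 := by positivity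
    field_simp
  set sj : Fin d → Finset (Fin m × Fin d) := fun j =>
    Finset.univ.map ⟨fun l => (l, j), fun a b h => (Prod.ext_iff.1 h).1⟩ with hsjdef
  have hsjcard : ∀ j, (sj j).card = m := fun j => by simp [hsjdef]
  have hsjsum : ∀ (j : Fin d) (F : Fin m × Fin d → ℝ),
      ∑ p ∈ sj j, F p = ∑ l : Fin m, F (l, j) := fun j F => by
    rw [hsjdef, Finset.sum_map]
    rfl
  set Xn : Fin m × Fin d → Θ → ℝ := fun p θ => -X p θ with hXndef
  set Up : Fin d → Set Θ := fun j => {θ | ((sj j).card : ℝ) * ε' ≤ ∑ p ∈ sj j, X p θ}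
    with hUpdef
  set Un : Fin d → Set Θ := fun j => {θ | ((sj j).card : ℝ) * ε' ≤ ∑ p ∈ sj j, Xn p θ}
    with hUndef
  have hXnind : iIndepFun Xn P :=
    hXind.comp (fun _ => fun r : ℝ => -r) (fun _ => measurable_neg)
  have hXnmeas : ∀ p, Measurable (Xn p) := fun p => (hXmeas p).neg
  have hXnbd : ∀ p : Fin m × Fin d, ∀ᵐ θ ∂P, |Xn p θ| ≤ 2 * c := fun p =>
    (hXbd p).mono fun θ h => by simpa [hXndef, abs_neg] using h
  have hXnmgf : ∀ p : Fin m × Fin d, ∀ t : ℝ, mgf (Xn p) P t ≤ Real.exp (t ^ 2 * c ^ 2 / 2) := by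
    intro p t
    have hrw : Xn p = -(X p) := rfl
    rw [hrw, mgf_neg]
    simpa [neg_sq] using hXmgf p (-t)
  have hexpcard : ∀ j : Fin d,
      Real.exp (-((sj j).card : ℝ) * ε' ^ 2 / (2 * c ^ 2)) = e0 := by
    intro j
    rw [hsjcard j]
    exact he0
  have hUple : ∀ j, P (Up j) ≤ ENNReal.ofReal e0 := by
    intro j
    have h1 := tail_bound hXind hXmeas (sj j) hc (fun p _ => hXbd p) (fun p _ => hXmgf p) hε'pos
    rw [← ENNReal.ofReal_toReal (measure_ne_top P (Up j))]
    apply ENNReal.ofReal_le_ofReal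
    have h3 : P (Up j) = P {θ | ((sj j).card : ℝ) * ε' ≤ ∑ p ∈ sj j, X p θ} := by
      simp only [hUpdef]
    rw [h3]
    exact h1.trans (hexpcard j).le
  have hUnle : ∀ j, P (Un j) ≤ ENNReal.ofReal e0 := by
    intro j
    have h1 := tail_bound hXnind hXnmeas (sj j) hc (fun p _ => hXnbd p) (fun p _ => hXnmgf p) hε'pos
    rw [← ENNReal.ofReal_toReal (measure_ne_top P (Un j))]
    apply ENNReal.ofReal_le_ofReal
    have h3 : P (Un j) = P {θ | ((sj j).card : ℝ) * ε' ≤ ∑ p ∈ sj j, Xn p θ} := by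
      simp only [hUndef]
    rw [h3]
    exact h1.trans (hexpcard j).le
  have hYΩ : ∀ p : Fin m × Fin d, P {θ | Y p θ ∉ Ω} = 0 := by
    intro p
    have h1 : {θ | Y p θ ∉ Ω} = (Y p) ⁻¹' Ωᶜ := rfl
    rw [h1, ← Measure.map_apply (hYmeas p) hΩmeas.compl, hmapY p,
      measure_compl hΩmeas (measure_ne_top _ _), hρΩ (x p.2) (hxΩ p.2)]
    simp
  set A : Set Θ := (⋂ j, ((Up j)ᶜ ∩ (Un j)ᶜ)) ∩ (⋂ p : Fin m × Fin d, {θ | Y p θ ∈ Ω})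
    with hAdef
  have hAc : Aᶜ ⊆ (⋃ j, (Up j ∪ Un j)) ∪ (⋃ p : Fin m × Fin d, {θ | Y p θ ∉ Ω}) := by
    intro θ hθ
    rw [hAdef, Set.mem_compl_iff, Set.mem_inter_iff, not_and_or] at hθ
    rcases hθ with hθ | hθ
    · left
      rw [Set.mem_iInter] at hθ
      push_neg at hθ
      obtain ⟨j, hj⟩ := hθ
      rw [Set.mem_inter_iff, not_and_or] at hj
      refine Set.mem_iUnion.2 ⟨j, ?_⟩
      rcases hj with hj | hj
      · exact Or.inl (not_not.1 hj)
      · exact Or.inr (not_not.1 hj)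
    · right
      rw [Set.mem_iInter] at hθ
      push_neg at hθ
      obtain ⟨p, hp⟩ := hθ
      exact Set.mem_iUnion.2 ⟨p, hp⟩
  have hPAc : P Aᶜ ≤ ENNReal.ofReal (2 * d * e0) := by
    refine (measure_mono hAc).trans ?_
    calc P ((⋃ j, (Up j ∪ Un j)) ∪ ⋃ p : Fin m × Fin d, {θ | Y p θ ∉ Ω})
        ≤ P (⋃ j, (Up j ∪ Un j)) + P (⋃ p : Fin m × Fin d, {θ | Y p θ ∉ Ω}) :=
          measure_union_le _ _
    _ = P (⋃ j, (Up j ∪ Un j)) := by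
        rw [measure_iUnion_null fun p => hYΩ p, add_zero]
    _ ≤ ∑ j : Fin d, P (Up j ∪ Un j) := measure_iUnion_fintype_le _ _
    _ ≤ ∑ _j : Fin d, (ENNReal.ofReal e0 + ENNReal.ofReal e0) :=
        Finset.sum_le_sum fun j _ =>
          (measure_union_le _ _).trans (add_le_add (hUple j) (hUnle j))
    _ = ((d : ℕ) : ENNReal) * (ENNReal.ofReal e0 + ENNReal.ofReal e0) := by
        rw [Finset.sum_const, Finset.card_univ, Fintype.card_fin, nsmul_eq_mul]
    _ = ENNReal.ofReal (2 * d * e0) := by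
        rw [← ENNReal.ofReal_add he0nn he0nn, ← ENNReal.ofReal_natCast d,
          ← ENNReal.ofReal_mul (by positivity)]
        congr 1
        ring
  -- the deterministic estimate on the good event
  have hsub : A ⊆ {θ : Θ | ∀ z ∈ Ω,
      |fX ⬝ᵥ (K⁻¹ *ᵥ (propMatrixMC Φ d x m Y θ *ᵥ (K⁻¹ *ᵥ kerVec Φ d x z))) -
        fX ⬝ᵥ (K⁻¹ *ᵥ (propMatrix Ω ρ Φ d x *ᵥ (K⁻¹ *ᵥ kerVec Φ d x z)))| ≤
        ε * Real.sqrt Mk *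
          Real.sqrt (sSup {r : ℝ | ∃ v : Fin d → ℝ,
            (∀ i, |v i| = 1) ∧ r = v ⬝ᵥ (K⁻¹ *ᵥ v)}) * ‖f‖} := by
    intro θ hθ
    rw [hAdef, Set.mem_inter_iff] at hθ
    obtain ⟨hθ1, hθ2⟩ := hθ
    have hθup : ∀ j, θ ∉ Up j ∧ θ ∉ Un j := by
      intro j
      have h := Set.mem_iInter.1 hθ1 j
      exact ⟨h.1, h.2⟩
    have hθΩ : ∀ p : Fin m × Fin d, Y p θ ∈ Ω := fun p => Set.mem_iInter.1 hθ2 p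
    intro z hz
    set b : Fin d → ℝ := K⁻¹ *ᵥ kerVec Φ d x z with hbdef
    have hm0 : (0:ℝ) < m := by exact_mod_cast hm
    -- per-column deviation bound
    have hZbd : ∀ j, |(1/(m:ℝ)) * (∑ l : Fin m, ⟪g, Φ (Y (l, j) θ)⟫) - μJ j| ≤ ε' := by
      intro j
      have hsum : ∑ p ∈ sj j, X p θ = (∑ l : Fin m, ⟪g, Φ (Y (l, j) θ)⟫) - m * μJ j := by
        rw [hsjsum j]
        simp only [hXdef]
        rw [Finset.sum_sub_distrib]
        congr 1
        · refine Finset.sum_congr rfl fun l _ => ?_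
          simp [hqdef, hθΩ (l, j)]
        · simp [Finset.sum_const, mul_comm]
      have h1 : ∑ p ∈ sj j, X p θ < (m:ℝ) * ε' := by
        have h := (hθup j).1
        simp only [hUpdef, Set.mem_setOf_eq, not_le] at h
        rwa [hsjcard j] at h
      have h2 : -(∑ p ∈ sj j, X p θ) < (m:ℝ) * ε' := by
        have h := (hθup j).2
        simp only [hUndef, Set.mem_setOf_eq, not_le] at h
        rw [hsjcard j] at h
        have hneg : ∑ p ∈ sj j, Xn p θ = -∑ p ∈ sj j, X p θ := by
          simp [hXndef]
        rwa [hneg] at h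
      have heq : (1/(m:ℝ)) * (∑ l : Fin m, ⟪g, Φ (Y (l, j) θ)⟫) - μJ j
          = (1/(m:ℝ)) * (∑ p ∈ sj j, X p θ) := by
        rw [hsum]
        field_simp
      rw [heq, abs_mul, abs_of_pos (by positivity : (0:ℝ) < 1/(m:ℝ))]
      have habs : |∑ p ∈ sj j, X p θ| ≤ (m:ℝ) * ε' := by
        rw [abs_le]
        constructor <;> linarith
      calc 1/(m:ℝ) * |∑ p ∈ sj j, X p θ| ≤ 1/(m:ℝ) * ((m:ℝ) * ε') := by
            exact mul_le_mul_of_nonneg_left habs (by positivity)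
      _ = ε' := by field_simp
    -- column identities
    have hcolMC : ∀ j, ∑ i, a i * propMatrixMC Φ d x m Y θ i j
        = (1/(m:ℝ)) * ∑ l : Fin m, ⟪g, Φ (Y (l, j) θ)⟫ := by
      intro j
      simp only [propMatrixMC, Matrix.of_apply]
      calc ∑ i, a i * ((1/(m:ℝ)) * ∑ l : Fin m, ⟪Φ (x i), Φ (Y (l, j) θ)⟫)
          = (1/(m:ℝ)) * ∑ i, ∑ l : Fin m, a i * ⟪Φ (x i), Φ (Y (l, j) θ)⟫ := by
            rw [Finset.mul_sum]
            refine Finset.sum_congr rfl fun i _ => ?_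
            rw [Finset.mul_sum]
            refine Eq.trans ?_ (Finset.mul_sum _ _ _).symm
            ring_nf
            rw [Finset.mul_sum]
            refine Finset.sum_congr rfl fun l _ => by ring
      _ = (1/(m:ℝ)) * ∑ l : Fin m, ∑ i, a i * ⟪Φ (x i), Φ (Y (l, j) θ)⟫ := by
            rw [Finset.sum_comm]
      _ = (1/(m:ℝ)) * ∑ l : Fin m, ⟪g, Φ (Y (l, j) θ)⟫ := by
            congr 1
            exact Finset.sum_congr rfl fun l _ => (hgip _).symm
    have hρrestrict : ∀ j, (ρ (x j)).restrict Ω = ρ (x j) := by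
      intro j
      apply Measure.restrict_eq_self_of_ae_mem
      rw [MeasureTheory.ae_iff]
      have : {y | ¬ y ∈ Ω} = Ωᶜ := rfl
      rw [this, measure_compl hΩmeas (measure_ne_top _ _), hρΩ (x j) (hxΩ j)]
      simp
    have hIntij : ∀ i j, Integrable (fun y => ⟪Φ (x i), Φ y⟫) ((ρ (x j)).restrict Ω) := by
      intro i j
      refine (integrable_const Mk).mono' ?_ ?_
      · exact ContinuousOn.aestronglyMeasurable
          (ContinuousOn.inner continuousOn_const hΦcont) hΩmeas
      · rw [ae_restrict_iff' hΩmeas]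
        exact ae_of_all _ fun y hy => by
          rw [Real.norm_eq_abs]; exact hMk _ (hxΩ i) y hy
    have hcol : ∀ j, ∑ i, a i * propMatrix Ω ρ Φ d x i j = μJ j := by
      intro j
      simp only [propMatrix, Matrix.of_apply]
      have h1 : ∀ i : Fin d, a i * ∫ y in Ω, ⟪Φ (x i), Φ y⟫ ∂(ρ (x j))
          = ∫ y in Ω, a i * ⟪Φ (x i), Φ y⟫ ∂(ρ (x j)) := fun i =>
        (integral_const_mul _ _).symm
      rw [Finset.sum_congr rfl fun i _ => h1 i,
        ← integral_finset_sum _ fun i _ => (hIntij i j).const_mul (a i)]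
      have h2 : Set.EqOn (fun y => ∑ i, a i * ⟪Φ (x i), Φ y⟫) q Ω := by
        intro y hy
        simp only
        rw [← hgip]
        simp [hqdef, hy]
      rw [setIntegral_congr_fun hΩmeas h2]
      rw [show ∫ y in Ω, q y ∂(ρ (x j)) = ∫ y, q y ∂((ρ (x j)).restrict Ω) from rfl,
        hρrestrict j]
    -- rewriting the error as a weighted sum
    have hdotsimp : ∀ M : Matrix (Fin d) (Fin d) ℝ,
        fX ⬝ᵥ (K⁻¹ *ᵥ (M *ᵥ b)) = ∑ j, (∑ i, a i * M i j) * b j := by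
      intro M
      rw [Matrix.dotProduct_mulVec]
      have h1 : fX ᵥ* K⁻¹ = a := by
        rw [← hKisymm, Matrix.vecMul_transpose, hadef]
      rw [h1, Matrix.dotProduct_mulVec]
      simp only [dotProduct, Matrix.vecMul, dotProduct]
    have hΔ : fX ⬝ᵥ (K⁻¹ *ᵥ (propMatrixMC Φ d x m Y θ *ᵥ b)) -
        fX ⬝ᵥ (K⁻¹ *ᵥ (propMatrix Ω ρ Φ d x *ᵥ b))
        = ∑ j, ((1/(m:ℝ)) * (∑ l : Fin m, ⟪g, Φ (Y (l, j) θ)⟫) - μJ j) * b j := by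
      rw [hdotsimp, hdotsimp, ← Finset.sum_sub_distrib]
      refine Finset.sum_congr rfl fun j _ => ?_
      rw [hcolMC j, hcol j]
      ring
    -- the sign vector and Cauchy-Schwarz
    set w : Fin d → ℝ := fun j => if 0 ≤ b j then 1 else -1 with hwdef
    have hw1 : ∀ j, |w j| = 1 := by
      intro j
      by_cases h : 0 ≤ b j <;> simp [hwdef, h]
    have hwb : ∀ j, |b j| = w j * b j := by
      intro j
      by_cases h : 0 ≤ b j
      · simp [hwdef, h, abs_of_nonneg h]
      · rw [abs_of_neg (lt_of_not_ge h)]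
        simp [hwdef, h]
    set SS : Set ℝ := {r : ℝ | ∃ v : Fin d → ℝ,
      (∀ i, |v i| = 1) ∧ r = v ⬝ᵥ (K⁻¹ *ᵥ v)} with hSSdef
    have hSSfin : SS.Finite := by
      have h1 : SS ⊆ (fun v : Fin d → ℝ => v ⬝ᵥ (K⁻¹ *ᵥ v)) ''
          (Set.pi Set.univ fun _ : Fin d => ({-1, 1} : Set ℝ)) := by
        rintro r ⟨v, hv, rfl⟩
        refine ⟨v, fun i _ => ?_, rfl⟩
        rcases (abs_eq (by norm_num : (0:ℝ) ≤ 1)).1 (hv i) with h | h <;> simp [h]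
      exact Set.Finite.subset
        (Set.Finite.image _ (Set.Finite.pi fun _ => (Set.finite_singleton 1).insert (-1))) h1
    have hwKw : w ⬝ᵥ (K⁻¹ *ᵥ w) ≤ sSup SS :=
      le_csSup hSSfin.bddAbove ⟨w, hw1, rfl⟩
    set u : Fin d → ℝ := K⁻¹ *ᵥ w with hudef
    set hv : H := ∑ i, u i • Φ (x i) with hhvdef
    have h_wb_ip : w ⬝ᵥ b = ⟪hv, Φ z⟫ := by
      rw [hhvdef, inner_sum_smul_left, hbdef, Matrix.dotProduct_mulVec, ← hKisymm,
        Matrix.vecMul_transpose, ← hudef]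
      simp [dotProduct, kerVec]
    have h_hv_norm : ⟪hv, hv⟫ = w ⬝ᵥ (K⁻¹ *ᵥ w) := by
      rw [hhvdef, inner_sum_smul_left]
      have h3 : ∀ i, ⟪Φ (x i), ∑ j, u j • Φ (x j)⟫ = (K *ᵥ u) i := by
        intro i
        rw [inner_sum_smul_right]
        simp [Matrix.mulVec, dotProduct, hKdef, kerMatrix]
        exact Finset.sum_congr rfl fun j _ => by ring
      calc ∑ i, u i * ⟪Φ (x i), ∑ j, u j • Φ (x j)⟫ = ∑ i, u i * (K *ᵥ u) i := by
            exact Finset.sum_congr rfl fun i _ => by rw [h3 i]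
      _ = u ⬝ᵥ (K *ᵥ u) := rfl
      _ = u ⬝ᵥ w := by
          rw [hudef, Matrix.mulVec_mulVec, hKK, Matrix.one_mulVec]
      _ = w ⬝ᵥ (K⁻¹ *ᵥ w) := by rw [dotProduct_comm, hudef]
    have hbsum : ∑ j, |b j| ≤ Real.sqrt (sSup SS) * Real.sqrt Mk := by
      calc ∑ j, |b j| = w ⬝ᵥ b := Finset.sum_congr rfl fun j _ => hwb j
      _ = ⟪hv, Φ z⟫ := h_wb_ip
      _ ≤ ‖hv‖ * ‖Φ z‖ := real_inner_le_norm _ _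
      _ ≤ Real.sqrt (sSup SS) * Real.sqrt Mk := by
          refine mul_le_mul ?_ (hPhinorm z hz) (norm_nonneg _) (Real.sqrt_nonneg _)
          rw [norm_eq_sqrt_real_inner, h_hv_norm]
          exact Real.sqrt_le_sqrt hwKw
    -- conclusion
    rw [hΔ]
    calc |∑ j, ((1/(m:ℝ)) * (∑ l : Fin m, ⟪g, Φ (Y (l, j) θ)⟫) - μJ j) * b j|
        ≤ ∑ j, |((1/(m:ℝ)) * (∑ l : Fin m, ⟪g, Φ (Y (l, j) θ)⟫) - μJ j) * b j| :=
          Finset.abs_sum_le_sum_abs _ _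
    _ ≤ ∑ j, ε' * |b j| := by
        refine Finset.sum_le_sum fun j _ => ?_
        rw [abs_mul]
        exact mul_le_mul_of_nonneg_right (hZbd j) (abs_nonneg _)
    _ = ε' * ∑ j, |b j| := by rw [Finset.mul_sum]
    _ ≤ ε' * (Real.sqrt (sSup SS) * Real.sqrt Mk) :=
        mul_le_mul_of_nonneg_left hbsum hε'pos.le
    _ = ε * Real.sqrt Mk * Real.sqrt (sSup SS) * ‖f‖ := by
        rw [hε'def]
        ring
  -- putting everything together
  have hone : (1:ENNReal) ≤ P A + P Aᶜ := by
    rw [← measure_univ (μ := P), ← Set.union_compl_self A]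
    exact measure_union_le _ _
  calc ENNReal.ofReal (1 - 2 * d * e0)
      = 1 - ENNReal.ofReal (2 * d * e0) := by
        rw [ENNReal.ofReal_sub _ (by positivity), ENNReal.ofReal_one]
  _ ≤ 1 - P Aᶜ := tsub_le_tsub_left hPAc 1
  _ ≤ P A := by
      rw [tsub_le_iff_right]
      exact hone
  _ ≤ P {θ : Θ | ∀ z ∈ Ω,
      |fX ⬝ᵥ (K⁻¹ *ᵥ (propMatrixMC Φ d x m Y θ *ᵥ (K⁻¹ *ᵥ kerVec Φ d x z))) -
        fX ⬝ᵥ (K⁻¹ *ᵥ (propMatrix Ω ρ Φ d x *ᵥ (K⁻¹ *ᵥ kerVec Φ d x z)))| ≤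
        ε * Real.sqrt Mk *
          Real.sqrt (sSup {r : ℝ | ∃ v : Fin d → ℝ,
            (∀ i, |v i| = 1) ∧ r = v ⬝ᵥ (K⁻¹ *ᵥ v)}) * ‖f‖} := measure_mono hsub

end
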